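/- For every integer n ≥ 3, the strong matching preclusion number of the n-dimensional bubble-sort star graph BS_n equals 2; that is, the minimum cardinality of a set F* of vertices and edges of BS_n such that the graph obtained from BS_n by deleting the vertices of F* (together with all edges incident to them) and the edges of F* has neither a perfect matching nor an almost-perfect matching is 2. -/

import Mathlib

/-- The generating relation of the bubble-sort star graph: `u = v ∘ ⟨1,i⟩` for some
`i ∈ [2,n]` (0-based: swap of positions `0` and `i` with `i ≠ 0`), or `u = v ∘ ⟨i-1,i⟩`
for some `i ∈ [3,n]` (0-based: swap of consecutive positions `i, j = i+1` with `i ≥ 1`). -/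
def bssRel (n : ℕ) (u v : Equiv.Perm (Fin n)) : Prop :=
  (∃ i : Fin n, (i : ℕ) ≠ 0 ∧ u = v * Equiv.swap ⟨0, i.pos⟩ i) ∨
  (∃ i j : Fin n, (i : ℕ) + 1 = (j : ℕ) ∧ 1 ≤ (i : ℕ) ∧ u = v * Equiv.swap i j)

/-- The `n`-dimensional bubble-sort star graph `BS_n`, on the permutations of `{1,…,n}`. -/
def BS (n : ℕ) : SimpleGraph (Equiv.Perm (Fin n)) := SimpleGraph.fromRel (bssRel n)

/-- A set of edges `M` is a perfect matching of `G`: `M` consists of edges of `G` and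
every vertex lies in exactly one edge of `M`. -/
def IsPM {V : Type*} (G : SimpleGraph V) (M : Set (Sym2 V)) : Prop :=
  M ⊆ G.edgeSet ∧ ∀ v : V, ∃! e : Sym2 V, e ∈ M ∧ v ∈ e

/-- A set of edges `M` is an almost-perfect matching of `G`: there is exactly one
vertex lying in no edge of `M`, and every other vertex lies in exactly one edge of `M`. -/
def IsAPM {V : Type*} (G : SimpleGraph V) (M : Set (Sym2 V)) : Prop :=
  M ⊆ G.edgeSet ∧ ∃ w : V, (∀ e ∈ M, w ∉ e) ∧ ∀ v : V, v ≠ w → ∃! e : Sym2 V, e ∈ M ∧ v ∈ e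

/-- `G` has neither a perfect matching nor an almost-perfect matching. -/
def HasNoMatchings {V : Type*} (G : SimpleGraph V) : Prop :=
  (¬ ∃ M, IsPM G M) ∧ (¬ ∃ M, IsAPM G M)

/-- `(S, F)` is a strong matching preclusion set of `G`: deleting the vertices of `S`
(with all incident edges) and the edges of `F` leaves a graph with neither a perfect
matching nor an almost-perfect matching. -/
def IsSMPSet {V : Type*} (G : SimpleGraph V) (S : Set V) (F : Set (Sym2 V)) : Prop :=
  F ⊆ G.edgeSet ∧ HasNoMatchings ((G.deleteEdges F).induce (Sᶜ : Set V))

/-- `F` is a matching preclusion set of `G`: `G - F` has neither a perfect matching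
nor an almost-perfect matching. -/
def IsMPSet {V : Type*} (G : SimpleGraph V) (F : Set (Sym2 V)) : Prop :=
  F ⊆ G.edgeSet ∧ HasNoMatchings (G.deleteEdges F)

/-- `BS_n^i`: the set of permutations whose last entry equals `i`. -/
def BSslice {n : ℕ} (i : Fin n) : Set (Equiv.Perm (Fin n)) :=
  {a | a ⟨n - 1, Nat.sub_lt i.pos Nat.one_pos⟩ = i}

/-- `(V₁, V₂)` is a bipartition of `G`: the two classes partition the vertices and every
edge has one end in each class. -/
def Bipartition {V : Type*} (G : SimpleGraph V) (V1 V2 : Set V) : Prop :=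
  Disjoint V1 V2 ∧ V1 ∪ V2 = Set.univ ∧
    ∀ ⦃u v⦄, G.Adj u v → (u ∈ V1 ∧ v ∈ V2) ∨ (u ∈ V2 ∧ v ∈ V1)

/-- For every `n ≥ 3`, the strong matching preclusion number of `BS_n` equals `2`:
`2` is the least possible value of `|S| + |F|` over all strong matching preclusion
sets `(S, F)` of `BS_n`. -/

lemma pm_of_invol {V : Type*} (G : SimpleGraph V) (σ : V → V)
    (hinv : ∀ v, σ (σ v) = v) (hadj : ∀ v, G.Adj v (σ v)) :
    IsPM G {e | ∃ v, e = s(v, σ v)} := by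
  constructor
  · rintro e ⟨v, rfl⟩
    exact (hadj v)
  · intro v
    refine ⟨s(v, σ v), ⟨⟨v, rfl⟩, Sym2.mem_mk_left _ _⟩, ?_⟩
    rintro e ⟨⟨u, rfl⟩, hv⟩
    rw [Sym2.mem_iff] at hv
    rcases hv with rfl | rfl
    · rfl
    · rw [hinv]
      exact Sym2.eq_swap

lemma apm_of_invol {V : Type*} (G : SimpleGraph V) (w : V) (σ : V → V)
    (hw : σ w = w) (hinv : ∀ v, σ (σ v) = v) (hadj : ∀ v, v ≠ w → G.Adj v (σ v)) :
    IsAPM G {e | ∃ v, v ≠ w ∧ e = s(v, σ v)} := by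
  have hne : ∀ v, v ≠ w → σ v ≠ w := by
    intro v hv h
    exact hv (by rw [← hinv v, h, hw])
  constructor
  · rintro e ⟨v, hv, rfl⟩
    exact (hadj v hv)
  · refine ⟨w, ?_, ?_⟩
    · rintro e ⟨v, hv, rfl⟩ hmem
      rw [Sym2.mem_iff] at hmem
      rcases hmem with rfl | rfl
      · exact hv rfl
      · exact hne v hv rfl
    · intro v hv
      refine ⟨s(v, σ v), ⟨⟨v, hv, rfl⟩, Sym2.mem_mk_left _ _⟩, ?_⟩
      rintro e ⟨⟨u, hu, rfl⟩, hmem⟩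
      rw [Sym2.mem_iff] at hmem
      rcases hmem with rfl | rfl
      · rfl
      · rw [hinv]
        exact Sym2.eq_swap


lemma parity_of_pm {V : Type*} (G : SimpleGraph V) (p : Set V)
    (hbip : ∀ u v, G.Adj u v → (u ∈ p ↔ v ∉ p))
    (M : Set (Sym2 V)) (hM : IsPM G M) : p.ncard = pᶜ.ncard := by
  classical
  choose f hf using hM.2
  have hmem : ∀ v, v ∈ f v := fun v => (hf v).1.2
  set φ : V → V := fun v => Sym2.Mem.other (hmem v) with hφ
  have hspec : ∀ v, s(v, φ v) = f v := fun v => Sym2.other_spec (hmem v)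
  have hadj : ∀ v, G.Adj v (φ v) := by
    intro v
    rw [← SimpleGraph.mem_edgeSet, hspec]
    exact hM.1 (hf v).1.1
  have hinv : ∀ v, φ (φ v) = v := by
    intro v
    have h1 : f v = f (φ v) := by
      refine (hf (φ v)).2 (f v) ⟨(hf v).1.1, ?_⟩
      rw [← hspec v]; exact Sym2.mem_mk_right _ _
    have h2 : s(φ v, φ (φ v)) = s(v, φ v) := by rw [hspec, hspec, h1]
    rw [Sym2.eq_iff] at h2
    rcases h2 with ⟨h3, _⟩ | ⟨_, h3⟩
    · exact absurd h3 (hadj v).ne'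
    · exact h3
  have hinj : Function.Injective φ := Function.Involutive.injective hinv
  have hbij : Set.BijOn φ p pᶜ := by
    refine ⟨fun v hv => (hbip v (φ v) (hadj v)).1 hv, hinj.injOn, ?_⟩
    intro u hu
    refine ⟨φ u, ?_, hinv u⟩
    by_contra h
    exact hu ((hbip u (φ u) (hadj u)).mpr h)
  rw [← hbij.image_eq, Set.ncard_image_of_injOn hinj.injOn]

lemma parity_of_apm {V : Type*} [Finite V] (G : SimpleGraph V) (p : Set V)
    (hbip : ∀ u v, G.Adj u v → (u ∈ p ↔ v ∉ p))
    (M : Set (Sym2 V)) (hM : IsAPM G M) :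
    p.ncard = pᶜ.ncard + 1 ∨ pᶜ.ncard = p.ncard + 1 := by
  classical
  obtain ⟨hsub, w, hwnot, hcov⟩ := hM
  choose f hf using hcov
  set φ : V → V := fun v => if h : v = w then v else Sym2.Mem.other (hf v h).1.2 with hφdef
  have hφw : φ w = w := dif_pos rfl
  have hspec : ∀ v (h : v ≠ w), s(v, φ v) = f v h := by
    intro v h
    simp only [hφdef, dif_neg h]
    exact Sym2.other_spec _
  have hadj : ∀ v, v ≠ w → G.Adj v (φ v) := by
    intro v h
    rw [← SimpleGraph.mem_edgeSet, hspec v h]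
    exact hsub (hf v h).1.1
  have hφne : ∀ v (h : v ≠ w), φ v ≠ w := by
    intro v h hcontra
    apply hwnot (f v h) (hf v h).1.1
    rw [← hspec v h, hcontra]
    exact Sym2.mem_mk_right _ _
  have hinv : ∀ v, φ (φ v) = v := by
    intro v
    by_cases h : v = w
    · rw [h, hφw, hφw]
    · have h2 := hφne v h
      have h1 : f v h = f (φ v) h2 := by
        refine (hf (φ v) h2).2 (f v h) ⟨(hf v h).1.1, ?_⟩
        rw [← hspec v h]; exact Sym2.mem_mk_right _ _
      have h3 : s(φ v, φ (φ v)) = s(v, φ v) := by rw [hspec _ h2, hspec _ h, h1]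
      rw [Sym2.eq_iff] at h3
      rcases h3 with ⟨h4, _⟩ | ⟨_, h4⟩
      · exact absurd h4 (hadj v h).ne'
      · exact h4
  have hinj : Function.Injective φ := Function.Involutive.injective hinv
  have hbij : Set.BijOn φ (p \ {w}) (pᶜ \ {w}) := by
    refine ⟨?_, hinj.injOn, ?_⟩
    · rintro v ⟨hvp, hvw⟩
      exact ⟨(hbip v (φ v) (hadj v hvw)).1 hvp, hφne v hvw⟩
    · rintro u ⟨hup, huw⟩
      refine ⟨φ u, ⟨?_, hφne u huw⟩, hinv u⟩
      by_contra h
      exact hup ((hbip u (φ u) (hadj u huw)).mpr h)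
  have hcard : (p \ {w}).ncard = (pᶜ \ {w}).ncard := by
    rw [← hbij.image_eq, Set.ncard_image_of_injOn hinj.injOn]
  by_cases hwp : w ∈ p
  · left
    have h1 : (p \ {w}).ncard + 1 = p.ncard := Set.ncard_diff_singleton_add_one hwp
    have h2 : pᶜ \ {w} = pᶜ := Set.diff_singleton_eq_self (fun h => h hwp)
    rw [← h1, hcard, h2]
  · right
    have h1 : (pᶜ \ {w}).ncard + 1 = pᶜ.ncard := Set.ncard_diff_singleton_add_one hwp
    have h2 : p \ {w} = p := Set.diff_singleton_eq_self hwp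
    rw [← h1, ← hcard, h2]


lemma fin_ne01 (m : ℕ) : (0 : Fin (m+3)) ≠ 1 := by
  simp [Fin.ext_iff]

lemma fin_ne12 (m : ℕ) : (1 : Fin (m+3)) ≠ 2 := by
  simp [Fin.ext_iff, Nat.mod_eq_of_lt (show 2 < m + 3 by omega)]

lemma mul_swap_ne {n : ℕ} (u : Equiv.Perm (Fin n)) {a b : Fin n} (hab : a ≠ b) :
    u ≠ u * Equiv.swap a b := by
  intro h
  have h2 : Equiv.swap a b = 1 := left_eq_mul.mp h
  have := congrArg (fun f => f a) h2
  simp [Equiv.swap_apply_left] at this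
  exact hab this.symm

lemma bs_adj1 (m : ℕ) (u : Equiv.Perm (Fin (m+3))) :
    (BS (m+3)).Adj u (u * Equiv.swap 0 1) := by
  rw [BS, SimpleGraph.fromRel_adj]
  refine ⟨mul_swap_ne u (fin_ne01 m), Or.inr (Or.inl ?_)⟩
  exact ⟨1, by simp, rfl⟩

lemma bs_adj2 (m : ℕ) (u : Equiv.Perm (Fin (m+3))) :
    (BS (m+3)).Adj u (u * Equiv.swap 1 2) := by
  rw [BS, SimpleGraph.fromRel_adj]
  exact ⟨mul_swap_ne u (fin_ne12 m), Or.inr (Or.inr ⟨1, 2, by simp [Nat.mod_eq_of_lt (show 2 < m + 3 by omega)], by simp, rfl⟩)⟩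

lemma bs_sign {n : ℕ} {u v : Equiv.Perm (Fin n)} (h : (BS n).Adj u v) :
    Equiv.Perm.sign u = - Equiv.Perm.sign v := by
  rw [BS, SimpleGraph.fromRel_adj] at h
  have key : ∀ a b : Equiv.Perm (Fin n), bssRel n a b →
      Equiv.Perm.sign a = - Equiv.Perm.sign b := by
    rintro a b (⟨i, hi, rfl⟩ | ⟨i, j, hij, _, rfl⟩)
    · rw [map_mul, Equiv.Perm.sign_swap (by simp [Fin.ext_iff, Ne.symm hi])]
      rw [mul_neg_one]
    · rw [map_mul, Equiv.Perm.sign_swap (by intro hc; rw [hc] at hij; omega)]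
      rw [mul_neg_one]
  rcases h.2 with h2 | h2
  · exact key u v h2
  · rw [key v u h2, neg_neg]


open Equiv

-- even/odd permutation counts
lemma even_odd_card (m : ℕ) :
    ({u : Equiv.Perm (Fin (m+3)) | Equiv.Perm.sign u = 1})ᶜ.ncard
      = {u : Equiv.Perm (Fin (m+3)) | Equiv.Perm.sign u = 1}.ncard := by
  set E := {u : Equiv.Perm (Fin (m+3)) | Equiv.Perm.sign u = 1} with hE
  set s := Equiv.swap (0 : Fin (m+3)) 1 with hs
  have hss : Equiv.Perm.sign s = -1 := Equiv.Perm.sign_swap (by simp [Fin.ext_iff])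
  have hsgn : ∀ u : Equiv.Perm (Fin (m+3)), Equiv.Perm.sign (u * s) = - Equiv.Perm.sign u := by
    intro u; rw [map_mul, hss, mul_neg_one]
  have hinv : ∀ u : Equiv.Perm (Fin (m+3)), (u * s) * s = u := by
    intro u; rw [mul_assoc, Equiv.swap_mul_self, mul_one]
  have hbij : Set.BijOn (· * s) E Eᶜ := by
    refine ⟨?_, ?_, ?_⟩
    · intro u hu
      simp only [hE, Set.mem_compl_iff, Set.mem_setOf_eq] at hu ⊢
      rw [hsgn, hu]; decide
    · exact (mul_left_injective s).injOn
    · intro u hu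
      refine ⟨u * s, ?_, hinv u⟩
      simp only [hE, Set.mem_compl_iff, Set.mem_setOf_eq] at hu ⊢
      rw [hsgn]
      rcases Int.units_eq_one_or (Equiv.Perm.sign u) with h | h
      · exact absurd h hu
      · rw [h]; decide
  rw [← hbij.image_eq, Set.ncard_image_of_injOn (mul_left_injective s).injOn]

lemma units_flip {a b : ℤˣ} (h : a = -b) : (a = 1 ↔ ¬ b = 1) := by
  subst h
  rcases Int.units_eq_one_or b with hb | hb <;> rw [hb] <;> decide

lemma bs_upper (m : ℕ) :
    HasNoMatchings (((BS (m+3)).deleteEdges ∅).induce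
      (({1, Equiv.swap 0 1 * Equiv.swap 1 2} : Set (Equiv.Perm (Fin (m+3))))ᶜ)) := by
  classical
  set c : Equiv.Perm (Fin (m+3)) := Equiv.swap 0 1 * Equiv.swap 1 2 with hc
  set S : Set (Equiv.Perm (Fin (m+3))) := {1, c} with hSdef
  set E := {u : Equiv.Perm (Fin (m+3)) | Equiv.Perm.sign u = 1} with hE
  set G' := ((BS (m+3)).deleteEdges ∅).induce (Sᶜ) with hG'
  have h01 : (0 : Fin (m+3)) ≠ 1 := by simp [Fin.ext_iff]
  have h02 : (0 : Fin (m+3)) ≠ 2 := by simp [Fin.ext_iff, Nat.mod_eq_of_lt (show 2 < m + 3 by omega)]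
  have h12 : (1 : Fin (m+3)) ≠ 2 := by simp [Fin.ext_iff, Nat.mod_eq_of_lt (show 2 < m + 3 by omega)]
  have hc1 : c ≠ 1 := by
    intro h
    have h2 := congrArg (fun f => f (0 : Fin (m+3))) h
    simp only [hc, Equiv.Perm.mul_apply, Equiv.Perm.one_apply,
      Equiv.swap_apply_of_ne_of_ne h01 h02, Equiv.swap_apply_left] at h2
    exact h01 h2.symm
  have hcE : c ∈ E := by
    simp only [hE, Set.mem_setOf_eq, hc, map_mul,
      Equiv.Perm.sign_swap h01, Equiv.Perm.sign_swap h12]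
    decide
  have h1E : (1 : Equiv.Perm (Fin (m+3))) ∈ E := by
    simp [hE]
  have hSE : S ⊆ E := by
    rintro x (rfl | rfl)
    · exact h1E
    · exact hcE
  have hN2 : 2 ≤ E.ncard := by
    calc 2 = S.ncard := (Set.ncard_pair (Ne.symm hc1)).symm
    _ ≤ E.ncard := Set.ncard_le_ncard hSE E.toFinite
  -- the parity set on the subtype
  set p : Set (↥(Sᶜ)) := {x | Equiv.Perm.sign x.val = 1} with hp
  have himg : Subtype.val '' p = Sᶜ ∩ E := by
    have : p = Subtype.val ⁻¹' E := rfl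
    rw [this]
    exact Subtype.image_preimage_coe _ _
  have himgc : Subtype.val '' pᶜ = Sᶜ ∩ Eᶜ := by
    have : pᶜ = Subtype.val ⁻¹' Eᶜ := rfl
    rw [this]
    exact Subtype.image_preimage_coe _ _
  have hpcard : p.ncard = E.ncard - 2 := by
    rw [← Set.ncard_image_of_injective p Subtype.val_injective, himg,
      ← Set.diff_eq_compl_inter, Set.ncard_diff hSE,
      show S.ncard = 2 from Set.ncard_pair (Ne.symm hc1)]
  have hpccard : pᶜ.ncard = E.ncard := by
    rw [← Set.ncard_image_of_injective pᶜ Subtype.val_injective, himgc,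
      ← Set.diff_eq_compl_inter]
    have : Eᶜ \ S = Eᶜ := by
      ext x
      exact ⟨fun h => h.1, fun hx => ⟨hx, fun hs => hx (hSE hs)⟩⟩
    rw [this, even_odd_card]
  have hbip : ∀ u v : ↥(Sᶜ), G'.Adj u v → (u ∈ p ↔ v ∉ p) := by
    intro u v huv
    have hadj : (BS (m+3)).Adj u.val v.val := by
      have := huv
      simp only [hG', SimpleGraph.comap_adj, SimpleGraph.deleteEdges_adj] at this
      exact this.1
    exact units_flip (bs_sign hadj)
  constructor
  · rintro ⟨M, hM⟩
    have := parity_of_pm G' p hbip M hM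
    rw [hpcard, hpccard] at this
    omega
  · rintro ⟨M, hM⟩
    have := parity_of_apm G' p hbip M hM
    rw [hpcard, hpccard] at this
    omega

lemma bs_pm_of (m : ℕ) (F : Set (Sym2 (Equiv.Perm (Fin (m+3))))) (s : Equiv.Perm (Fin (m+3)))
    (hadj : ∀ u, (BS (m+3)).Adj u (u * s)) (hs : s * s = 1)
    (hF : ∀ u, s(u, u * s) ∉ F) :
    ∃ M, IsPM (((BS (m+3)).deleteEdges F).induce
      ((∅ : Set (Equiv.Perm (Fin (m+3))))ᶜ)) M := by
  refine ⟨_, pm_of_invol _ (fun x => ⟨x.val * s, by simp⟩) ?_ ?_⟩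
  · intro x
    apply Subtype.ext
    show x.val * s * s = x.val
    rw [mul_assoc, hs, mul_one]
  · intro x
    rw [SimpleGraph.comap_adj]
    exact SimpleGraph.deleteEdges_adj.mpr ⟨hadj x.val, hF x.val⟩

lemma swap01_ne_swap12 (m : ℕ) :
    Equiv.swap (0 : Fin (m+3)) 1 ≠ Equiv.swap 1 2 := by
  intro h
  have h2 := congrArg (fun f => f (0 : Fin (m+3))) h
  simp only [Equiv.swap_apply_left] at h2
  rw [Equiv.swap_apply_of_ne_of_ne (fin_ne01 m) (by simp [Fin.ext_iff, Nat.mod_eq_of_lt (show 2 < m + 3 by omega)])] at h2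
  exact fin_ne01 m h2.symm

lemma bs_pm_one_edge (m : ℕ) (e : Sym2 (Equiv.Perm (Fin (m+3)))) :
    ∃ M, IsPM (((BS (m+3)).deleteEdges {e}).induce
      ((∅ : Set (Equiv.Perm (Fin (m+3))))ᶜ)) M := by
  by_cases he : ∃ u, e = s(u, u * Equiv.swap (0 : Fin (m+3)) 1)
  · obtain ⟨w, rfl⟩ := he
    refine bs_pm_of m _ (Equiv.swap 1 2) (bs_adj2 m) (Equiv.swap_mul_self _ _) ?_
    intro u hu
    rw [Set.mem_singleton_iff, Sym2.eq_iff] at hu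
    rcases hu with ⟨rfl, h2⟩ | ⟨h1, h2⟩
    · exact swap01_ne_swap12 m (mul_left_cancel h2).symm
    · apply swap01_ne_swap12 m
      have h3 : w * (Equiv.swap (0 : Fin (m+3)) 1 * Equiv.swap 1 2) = w * 1 := by
        rw [← mul_assoc, ← h1, h2, mul_one]
      have h4 := mul_left_cancel h3
      have h5 := eq_inv_of_mul_eq_one_left h4
      rw [Equiv.swap_inv] at h5
      exact ((Equiv.swap_inv (1 : Fin (m+3)) 2) ▸ eq_inv_of_mul_eq_one_left h4 : _)
  · push_neg at he
    refine bs_pm_of m _ (Equiv.swap 0 1) (bs_adj1 m) (Equiv.swap_mul_self _ _) ?_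
    intro u hu
    rw [Set.mem_singleton_iff] at hu
    exact he u hu.symm

lemma bs_apm_one_vertex (m : ℕ) (v : Equiv.Perm (Fin (m+3))) :
    ∃ M, IsAPM (((BS (m+3)).deleteEdges ∅).induce
      (({v} : Set (Equiv.Perm (Fin (m+3))))ᶜ)) M := by
  set s := Equiv.swap (0 : Fin (m+3)) 1 with hs
  have hss : s * s = 1 := Equiv.swap_mul_self _ _
  have hvs : v * s ∈ ({v} : Set (Equiv.Perm (Fin (m+3))))ᶜ := by
    intro hmem
    exact mul_swap_ne v (fin_ne01 m) (Set.mem_singleton_iff.mp hmem).symm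
  set w : ↥(({v} : Set (Equiv.Perm (Fin (m+3))))ᶜ) := ⟨v * s, hvs⟩ with hw
  set σ : ↥(({v} : Set (Equiv.Perm (Fin (m+3))))ᶜ) → ↥(({v} : Set (Equiv.Perm (Fin (m+3))))ᶜ) :=
    fun x => if h : x.val * s = v then x
      else ⟨x.val * s, fun hmem => h (Set.mem_singleton_iff.mp hmem)⟩ with hσ
  have hσw : σ w = w := by
    apply dif_pos
    show v * s * s = v
    rw [mul_assoc, hss, mul_one]
  have hσinv : ∀ x, σ (σ x) = x := by
    intro x
    by_cases h : x.val * s = v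
    · have e1 : σ x = x := dif_pos h
      rw [e1, e1]
    · have e1 : σ x = ⟨x.val * s, fun hmem => h (Set.mem_singleton_iff.mp hmem)⟩ := dif_neg h
      rw [e1]
      have h3 : ¬ (x.val * s * s = v) := by
        rw [mul_assoc, hss, mul_one]
        exact fun hh => x.property (Set.mem_singleton_iff.mpr hh)
      rw [show σ ⟨x.val * s, fun hmem => h (Set.mem_singleton_iff.mp hmem)⟩
        = ⟨x.val * s * s, fun hmem => h3 (Set.mem_singleton_iff.mp hmem)⟩ from dif_neg h3]
      apply Subtype.ext
      show x.val * s * s = x.val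
      rw [mul_assoc, hss, mul_one]
  have hσadj : ∀ x, x ≠ w → (((BS (m+3)).deleteEdges ∅).induce
      (({v} : Set (Equiv.Perm (Fin (m+3))))ᶜ)).Adj x (σ x) := by
    intro x hx
    have h : ¬ (x.val * s = v) := by
      intro h
      apply hx
      apply Subtype.ext
      have h2 := congrArg (· * s) h
      rw [mul_assoc, hss, mul_one] at h2
      exact h2
    rw [show σ x = ⟨x.val * s, fun hmem => h (Set.mem_singleton_iff.mp hmem)⟩ from dif_neg h]
    rw [SimpleGraph.comap_adj]
    exact SimpleGraph.deleteEdges_adj.mpr ⟨bs_adj1 m x.val, by simp⟩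
  exact ⟨_, apm_of_invol _ w σ hσw hσinv hσadj⟩

lemma bs_c_ne_one (m : ℕ) :
    (Equiv.swap 0 1 * Equiv.swap 1 2 : Equiv.Perm (Fin (m+3))) ≠ 1 := by
  intro h
  have h2 := congrArg (fun f => f (0 : Fin (m+3))) h
  simp only [Equiv.Perm.mul_apply, Equiv.Perm.one_apply,
    Equiv.swap_apply_of_ne_of_ne (fin_ne01 m) (by simp [Fin.ext_iff, Nat.mod_eq_of_lt (show 2 < m + 3 by omega)] : (0 : Fin (m+3)) ≠ 2),
    Equiv.swap_apply_left] at h2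
  exact fin_ne01 m h2.symm

theorem smp_bubbleSortStar (n : ℕ) (hn : 3 ≤ n) :
    IsLeast {k : ℕ | ∃ (S : Set (Equiv.Perm (Fin n))) (F : Set (Sym2 (Equiv.Perm (Fin n)))),
      IsSMPSet (BS n) S F ∧ k = S.ncard + F.ncard} 2 := by
  obtain ⟨m, rfl⟩ : ∃ m, n = m + 3 := ⟨n - 3, by omega⟩
  constructor
  · refine ⟨({1, Equiv.swap 0 1 * Equiv.swap 1 2} : Set (Equiv.Perm (Fin (m+3)))), ∅,
      ⟨by simp, bs_upper m⟩, ?_⟩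
    rw [Set.ncard_pair (Ne.symm (bs_c_ne_one m)), Set.ncard_empty]
  · rintro k ⟨S, F, ⟨hFsub, hno⟩, rfl⟩
    by_contra hlt
    push_neg at hlt
    have hSfin := S.toFinite
    have hFfin := F.toFinite
    by_cases hSe : S = ∅
    · subst hSe
      by_cases hFe : F = ∅
      · subst hFe
        exact hno.1 (bs_pm_of m ∅ (Equiv.swap 0 1) (bs_adj1 m)
          (Equiv.swap_mul_self _ _) (by simp))
      · have h1 : F.ncard = 1 := by
          have hpos := (Set.ncard_pos hFfin).mpr (Set.nonempty_iff_ne_empty.mpr hFe)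
          omega
        obtain ⟨e, rfl⟩ := Set.ncard_eq_one.mp h1
        exact hno.1 (bs_pm_one_edge m e)
    · have hpos := (Set.ncard_pos hSfin).mpr (Set.nonempty_iff_ne_empty.mpr hSe)
      have hF0 : F = ∅ := by
        rw [← Set.ncard_eq_zero hFfin]; omega
      subst hF0
      have hS1 : S.ncard = 1 := by
        have h0 : (∅ : Set (Sym2 (Equiv.Perm (Fin (m+3))))).ncard = 0 := Set.ncard_empty _
        omega
      obtain ⟨v, rfl⟩ := Set.ncard_eq_one.mp hS1
      exact hno.2 (bs_apm_one_vertex m v)
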